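/- Let m be a probability measure on (0, ∞) with cumulative distribution function F_m. On the product space (0, ∞) × [0, 1) with product measure m × Lebesgue, define U_m(x, y) = (1 − y)·F_m(x⁻) + y·F_m(x⁺), where F_m(x⁻) and F_m(x⁺) denote the left and right limits of F_m at x. Then U_m is a uniformly distributed random variable on [0, 1]: P(U_m ≤ z) = z for all z ∈ (0, 1). -/

import Mathlib

open MeasureTheory

open Set Filter Function
open scoped Topology ENNReal

/-- Let m be a probability measure on (0,∞) with CDF F_m.  On
(0,∞) × [0,1) with the product of m and Lebesgue measure, the random variable
U_m(x,y) = (1-y)·F_m(x⁻) + y·F_m(x⁺) is uniformly distributed on [0,1]. -/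
theorem uniformization_uniform
    (m : Measure ℝ) [IsProbabilityMeasure m] (hsupp : m (Set.Iic 0) = 0)
    (F : ℝ → ℝ) (hF : ∀ x, F x = (m (Set.Iic x)).toReal)
    (U : ℝ × ℝ → ℝ)
    (hU : ∀ p : ℝ × ℝ,
      U p = (1 - p.2) * Function.leftLim F p.1 + p.2 * Function.rightLim F p.1) :
    ∀ z ∈ Set.Ioo (0 : ℝ) 1,
      (m.prod (volume.restrict (Set.Ico (0 : ℝ) 1))) {p | U p ≤ z} = ENNReal.ofReal z := by
  intro z hz
  obtain ⟨hz0, hz1⟩ := hz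
  have hFc : F = ⇑(ProbabilityTheory.cdf m) := funext fun x => by
    rw [hF]; exact (ProbabilityTheory.cdf_eq_real m x).symm
  have hmono : Monotone F := hFc ▸ ProbabilityTheory.monotone_cdf m
  have hF0 : ∀ x, 0 ≤ F x := fun x => hFc ▸ ProbabilityTheory.cdf_nonneg m x
  have hLmono : Monotone (leftLim F) := fun a b h => hmono.leftLim h
  have hLF : ∀ x, leftLim F x ≤ F x := fun x => hmono.leftLim_le le_rfl
  have hL0 : ∀ x, 0 ≤ leftLim F x := fun x =>
    le_trans (hF0 (x - 1)) (hmono.le_leftLim (sub_one_lt x))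
  have hright : ∀ x, rightLim F x = F x := fun x => by
    rw [hFc]
    refine rightLim_eq_of_tendsto ?_
    exact ((ProbabilityTheory.cdf m).right_continuous x).tendsto.mono_left
      (nhdsWithin_mono x Ioi_subset_Ici_self)
  have hU' : ∀ p : ℝ × ℝ, U p = (1 - p.2) * leftLim F p.1 + p.2 * F p.1 := fun p => by
    rw [hU, hright]
  have hmIic : ∀ x, m (Set.Iic x) = ENNReal.ofReal (F x) := fun x => by
    rw [hFc]; exact (ProbabilityTheory.ofReal_cdf m x).symm
  have hmsing : ∀ x, m {x} = ENNReal.ofReal (F x - leftLim F x) := fun x => by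
    conv_lhs => rw [← ProbabilityTheory.measure_cdf (μ := m)]
    rw [StieltjesFunction.measure_singleton, hFc]
  have hUm : Measurable U := by
    have : U = fun p : ℝ × ℝ => (1 - p.2) * leftLim F p.1 + p.2 * F p.1 := funext hU'
    rw [this]
    exact ((measurable_const.sub measurable_snd).mul
        (hLmono.measurable.comp measurable_fst)).add
      (measurable_snd.mul (hmono.measurable.comp measurable_fst))
  have hSm : MeasurableSet {p : ℝ × ℝ | U p ≤ z} := measurableSet_le hUm measurable_const
  set ν := volume.restrict (Set.Ico (0:ℝ) 1) with hν
  have hprod : (m.prod ν) {p | U p ≤ z} = ∫⁻ x, ν (Prod.mk x ⁻¹' {p | U p ≤ z}) ∂m :=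
    Measure.prod_apply hSm
  have hslice : ∀ x, Prod.mk x ⁻¹' {p : ℝ × ℝ | U p ≤ z}
      = {y : ℝ | (1 - y) * leftLim F x + y * F x ≤ z} := by
    intro x; ext y; simp [hU']
  have hνset : ∀ T : Set ℝ, ν T = volume (T ∩ Set.Ico 0 1) := fun T =>
    Measure.restrict_apply' measurableSet_Ico
  have hfull : ∀ x, F x ≤ z → ν (Prod.mk x ⁻¹' {p : ℝ × ℝ | U p ≤ z}) = 1 := by
    intro x hx
    rw [hslice, hνset]
    have heq : {y : ℝ | (1 - y) * leftLim F x + y * F x ≤ z} ∩ Set.Ico 0 1 = Set.Ico 0 1 := by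
      apply inter_eq_right.mpr
      intro y hy
      obtain ⟨hy0, hy1⟩ := hy
      have h1 : (1 - y) * leftLim F x ≤ (1 - y) * F x :=
        mul_le_mul_of_nonneg_left (hLF x) (by linarith)
      have : (1 - y) * leftLim F x + y * F x ≤ F x := by nlinarith
      exact le_trans this hx
    rw [heq, Real.volume_Ico]
    norm_num
  have hempty : ∀ x, z < leftLim F x → ν (Prod.mk x ⁻¹' {p : ℝ × ℝ | U p ≤ z}) = 0 := by
    intro x hx
    rw [hslice, hνset]
    have heq : {y : ℝ | (1 - y) * leftLim F x + y * F x ≤ z} ∩ Set.Ico 0 1 = ∅ := by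
      apply eq_empty_of_forall_notMem
      rintro y ⟨hle, hy0, hy1⟩
      have h1 : y * leftLim F x ≤ y * F x := mul_le_mul_of_nonneg_left (hLF x) hy0
      have : leftLim F x ≤ (1 - y) * leftLim F x + y * F x := by nlinarith
      simp only [mem_setOf_eq] at hle
      linarith
    rw [heq]
    simp
  by_cases hD : ∃ x₀, leftLim F x₀ ≤ z ∧ z < F x₀
  · -- Case A: there is an atom straddling z
    obtain ⟨x₀, ha, hb⟩ := hD
    set a := leftLim F x₀ with ha_def
    set b := F x₀ with hb_def
    have hba : 0 < b - a := by linarith [hLF x₀]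
    set c := (z - a) / (b - a) with hc_def
    have hc0 : 0 ≤ c := div_nonneg (by linarith) hba.le
    have hc1 : c < 1 := (div_lt_one hba).mpr (by linarith)
    have hkey : c * (b - a) = z - a := div_mul_cancel₀ _ hba.ne'
    -- slice at x₀
    have hsl0 : ν (Prod.mk x₀ ⁻¹' {p : ℝ × ℝ | U p ≤ z}) = ENNReal.ofReal c := by
      rw [hslice, hνset]
      have heq : {y : ℝ | (1 - y) * a + y * b ≤ z} ∩ Set.Ico 0 1 = Set.Icc 0 c := by
        ext y
        simp only [mem_inter_iff, mem_setOf_eq, mem_Ico, mem_Icc]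
        constructor
        · rintro ⟨hle, hy0, hy1⟩
          exact ⟨hy0, (le_div_iff₀ hba).mpr (by nlinarith)⟩
        · rintro ⟨hy0, hyc⟩
          have hymul : y * (b - a) ≤ z - a := by
            calc y * (b - a) ≤ c * (b - a) := mul_le_mul_of_nonneg_right hyc hba.le
            _ = z - a := hkey
          exact ⟨by nlinarith, hy0, lt_of_le_of_lt hyc hc1⟩
      rw [heq, Real.volume_Icc, sub_zero]
    have hfun : (fun x => ν (Prod.mk x ⁻¹' {p : ℝ × ℝ | U p ≤ z}))
        = fun x => (Set.Iio x₀).indicator (fun _ => (1:ℝ≥0∞)) x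
            + ({x₀} : Set ℝ).indicator (fun _ => ENNReal.ofReal c) x := by
      funext x
      rcases lt_trichotomy x x₀ with h | h | h
      · rw [hfull x (le_trans (hmono.le_leftLim h) ha)]
        simp [Set.indicator, h, h.ne]
      · subst h
        rw [hsl0]
        simp [Set.indicator]
      · rw [hempty x (lt_of_lt_of_le hb (hmono.le_leftLim h))]
        simp [Set.indicator, not_lt.mpr h.le, h.ne']
    have hIio : m (Set.Iio x₀) = ENNReal.ofReal a := by
      have hsplit : m (Set.Iic x₀) = m (Set.Iio x₀) + m {x₀} := by
        rw [← Set.Iio_union_right,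
          measure_union (by simp) (measurableSet_singleton x₀)]
      rw [hmIic, hmsing] at hsplit
      have h2 : ENNReal.ofReal (b - a) + ENNReal.ofReal a
          = ENNReal.ofReal (b - a) + m (Set.Iio x₀) := by
        rw [← ENNReal.ofReal_add (by linarith) (hL0 x₀)]
        rw [show b - a + a = b by ring, hsplit, add_comm]
      exact ((ENNReal.add_right_inj ENNReal.ofReal_ne_top).mp h2).symm
    rw [hprod, hfun,
      lintegral_add_left (measurable_const.indicator measurableSet_Iio),
      lintegral_indicator_const measurableSet_Iio,
      lintegral_indicator_const (measurableSet_singleton x₀),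
      hIio, hmsing x₀, one_mul, ← ENNReal.ofReal_mul hc0, hkey,
      ← ENNReal.ofReal_add (hL0 x₀) (by linarith)]
    rw [ha_def, add_sub_cancel]
  · -- Case B: no atom straddles z
    push_neg at hD
    have hB : ∀ x, z < F x → z < leftLim F x := fun x h =>
      lt_of_not_ge fun hle => absurd h (not_lt.mpr (hD x hle))
    have hF00 : F 0 = 0 := by rw [hF, hsupp]; simp
    have hne : {x : ℝ | F x ≤ z}.Nonempty := ⟨0, by simp [hF00, hz0.le]⟩
    have ht : Tendsto F atTop (𝓝 1) := by
      rw [hFc]; exact ProbabilityTheory.tendsto_cdf_atTop m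
    obtain ⟨x₁, hx₁⟩ := (ht.eventually (eventually_gt_nhds hz1)).exists
    have hbdd : BddAbove {x : ℝ | F x ≤ z} := ⟨x₁, fun x hx =>
      le_of_not_gt fun h => absurd hx (not_le.mpr (lt_of_lt_of_le hx₁ (hmono h.le)))⟩
    set s := sSup {x : ℝ | F x ≤ z} with hs_def
    have hFs_le : F s ≤ z := by
      by_contra h
      push_neg at h
      have hLs := hB s h
      have hev : ∀ᶠ x in 𝓝[<] s, z < F x :=
        (hmono.tendsto_leftLim s).eventually (eventually_gt_nhds hLs)
      obtain ⟨u, hu, hsub⟩ := mem_nhdsLT_iff_exists_Ioo_subset.mp hev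
      obtain ⟨x, hxA, hux⟩ := exists_lt_of_lt_csSup hne hu
      have hxs : x ≤ s := le_csSup hbdd hxA
      have hxne : x ≠ s := fun he => absurd (he ▸ hxA) (not_le.mpr h)
      have : F x ≤ z := hxA
      exact absurd this (not_le.mpr (hsub ⟨hux, lt_of_le_of_ne hxs hxne⟩))
    have hFs_ge : z ≤ F s := by
      by_contra h
      push_neg at h
      have hrc : Tendsto F (𝓝[>] s) (𝓝 (F s)) := by
        rw [hFc]
        exact ((ProbabilityTheory.cdf m).right_continuous s).tendsto.mono_left
          (nhdsWithin_mono s Ioi_subset_Ici_self)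
      have hev : ∀ᶠ x in 𝓝[>] s, F x < z := hrc.eventually (eventually_lt_nhds h)
      obtain ⟨x, hfx, hsx⟩ := (hev.and self_mem_nhdsWithin).exists
      exact absurd (le_csSup hbdd hfx.le : x ≤ s) (not_le.mpr hsx)
    have hFs : F s = z := le_antisymm hFs_le hFs_ge
    have hfun : (fun x => ν (Prod.mk x ⁻¹' {p : ℝ × ℝ | U p ≤ z}))
        = fun x => (Set.Iic s).indicator (fun _ => (1:ℝ≥0∞)) x := by
      funext x
      by_cases h : x ≤ s
      · rw [hfull x (le_trans (hmono h) hFs.le)]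
        simp [Set.indicator, h]
      · push_neg at h
        have hzx : z < F x := lt_of_not_ge fun hc =>
          absurd (le_csSup hbdd hc) (not_le.mpr h)
        rw [hempty x (hB x hzx)]
        simp [Set.indicator, not_le.mpr h]
    rw [hprod, hfun, lintegral_indicator_const measurableSet_Iic, hmIic, hFs, one_mul]
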